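/- Let X be an n×p real matrix and S an r×n selection matrix, and define X* = S·X, x̄ = n⁻¹·Xᵀ·1_n, x̄* = r⁻¹·X*ᵀ·1_r, X_c* = X* − 1_r·x̄ᵀ, X_cr* = X* − 1_r·x̄*ᵀ. Assume X_cr*ᵀ·X_cr* is positive definite, and let d = r·(x̄* − x̄)ᵀ·(X_c*ᵀ·X_c*)⁻¹·(x̄* − x̄). Then (X_cr*ᵀ·X_cr*)⁻¹ = (X_c*ᵀ·X_c*)⁻¹ + (r/(1 − d))·(X_c*ᵀ·X_c*)⁻¹·(x̄* − x̄)·(x̄* − x̄)ᵀ·(X_c*ᵀ·X_c*)⁻¹. -/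

import Mathlib

open Matrix

lemma mul_vecMulVec' {m : Type*} [Fintype m] [DecidableEq m]
    (M : Matrix m m ℝ) (v w : m → ℝ) :
    M * vecMulVec v w = vecMulVec (M *ᵥ v) w := by
  ext i j
  simp [mul_apply, vecMulVec_apply, mulVec, dotProduct, Finset.sum_mul, mul_assoc]

lemma vecMulVec_mul' {m : Type*} [Fintype m] [DecidableEq m]
    (M : Matrix m m ℝ) (v w : m → ℝ) :
    vecMulVec v w * M = vecMulVec v (w ᵥ* M) := by
  ext i j
  simp [mul_apply, vecMulVec_apply, vecMul, dotProduct, Finset.mul_sum, mul_assoc]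

lemma vecMulVec_mul_vecMulVec' {m : Type*} [Fintype m] [DecidableEq m]
    (a b c e : m → ℝ) :
    vecMulVec a b * vecMulVec c e = (b ⬝ᵥ c) • vecMulVec a e := by
  ext i j
  simp [mul_apply, vecMulVec_apply, dotProduct, Finset.sum_mul, Finset.mul_sum]
  congr 1; ext k; ring

lemma vecMulVec_mulVec' {m : Type*} [Fintype m] (v w x : m → ℝ) :
    vecMulVec v w *ᵥ x = (w ⬝ᵥ x) • v := by
  ext i
  simp only [mulVec, vecMulVec_apply, dotProduct, Pi.smul_apply, smul_eq_mul, Finset.sum_mul]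
  exact Finset.sum_congr rfl fun k _ => by ring


/-- Sherman–Morrison identity for the subsample Gram matrices:
`(X_cr*ᵀX_cr*)⁻¹ = (X_c*ᵀX_c*)⁻¹ + (r/(1−d))(X_c*ᵀX_c*)⁻¹(x̄*−x̄)(x̄*−x̄)ᵀ(X_c*ᵀX_c*)⁻¹`
where `d = r(x̄* − x̄)ᵀ(X_c*ᵀX_c*)⁻¹(x̄* − x̄)`. -/
theorem subsample_centering_sherman_morrison (n r p : ℕ) (hn : 1 ≤ n) (hr : 1 ≤ r)
    (X : Matrix (Fin n) (Fin p) ℝ)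
    (S : Matrix (Fin r) (Fin n) ℝ)
    (hS : ∃ φ : Fin r → Fin n, Function.Injective φ ∧
      ∀ i j, S i j = if j = φ i then 1 else 0)
    (Xstar : Matrix (Fin r) (Fin p) ℝ) (hXstar : Xstar = S * X)
    (xbar : Fin p → ℝ) (hxbar : xbar = (n : ℝ)⁻¹ • (Xᵀ *ᵥ (1 : Fin n → ℝ)))
    (xbarstar : Fin p → ℝ)
    (hxbarstar : xbarstar = (r : ℝ)⁻¹ • (Xstarᵀ *ᵥ (1 : Fin r → ℝ)))
    (Xc : Matrix (Fin r) (Fin p) ℝ)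
    (hXc : Xc = Xstar - vecMulVec (1 : Fin r → ℝ) xbar)
    (Xcr : Matrix (Fin r) (Fin p) ℝ)
    (hXcr : Xcr = Xstar - vecMulVec (1 : Fin r → ℝ) xbarstar)
    (hpd : (Xcrᵀ * Xcr).PosDef)
    (d : ℝ)
    (hd : d = (r : ℝ) * ((xbarstar - xbar) ⬝ᵥ ((Xcᵀ * Xc)⁻¹ *ᵥ (xbarstar - xbar)))) :
    (Xcrᵀ * Xcr)⁻¹ =
      (Xcᵀ * Xc)⁻¹ +
        ((r : ℝ) / (1 - d)) •
          ((Xcᵀ * Xc)⁻¹ * vecMulVec (xbarstar - xbar) (xbarstar - xbar) *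
            (Xcᵀ * Xc)⁻¹) := by
  have hr0 : (r : ℝ) ≠ 0 := by positivity
  set v : Fin p → ℝ := xbarstar - xbar with hv
  set A : Matrix (Fin p) (Fin p) ℝ := Xcᵀ * Xc with hAdef
  set B : Matrix (Fin p) (Fin p) ℝ := Xcrᵀ * Xcr with hBdef
  set V : Matrix (Fin p) (Fin p) ℝ := vecMulVec v v with hVdef
  clear_value v A B V
  -- columns of Xcr sum to zero
  have hsum : ∀ k, ∑ i, Xcr i k = 0 := by
    intro k
    have hxb : xbarstar k = (r : ℝ)⁻¹ * ∑ i, Xstar i k := by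
      simp [hxbarstar, mulVec, dotProduct, transpose_apply, mul_comm]
    simp only [hXcr, Matrix.sub_apply, vecMulVec_apply, Pi.one_apply, one_mul,
      Finset.sum_sub_distrib, Finset.sum_const, Finset.card_univ, Fintype.card_fin,
      nsmul_eq_mul, hxb]
    field_simp
    ring
  -- Xc entries vs Xcr entries
  have hXcXcr : ∀ k i, Xc k i = Xcr k i + v i := by
    intro k i
    simp [hXc, hXcr, hv, vecMulVec_apply]
  -- key decomposition A = B + r • V
  have hAB : A = B + (r : ℝ) • V := by
    ext i j
    simp only [hAdef, hBdef, hVdef, Matrix.add_apply, Matrix.smul_apply, mul_apply, transpose_apply,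
      vecMulVec_apply, smul_eq_mul]
    have expand : ∀ k : Fin r, Xc k i * Xc k j =
        Xcr k i * Xcr k j + v j * Xcr k i + (v i * Xcr k j + v i * v j) := by
      intro k; rw [hXcXcr k i, hXcXcr k j]; ring
    simp_rw [expand, Finset.sum_add_distrib, ← Finset.mul_sum, hsum i, hsum j,
      Finset.sum_const, Finset.card_univ, Fintype.card_fin, nsmul_eq_mul]
    ring
  -- V is positive semidefinite scaled
  have hVpsd : ((r : ℝ) • V).PosSemidef := by
    refine .of_dotProduct_mulVec_nonneg ?_ ?_
    · ext i j
      simp [hVdef, conjTranspose_apply, vecMulVec_apply, mul_comm]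
    · intro x
      have : ((r : ℝ) • V) *ᵥ x = ((r : ℝ) * (v ⬝ᵥ x)) • v := by
        rw [hVdef, smul_mulVec, vecMulVec_mulVec', smul_smul]
      rw [this]
      simp only [star_trivial, dotProduct_smul, smul_eq_mul]
      have hxv : x ⬝ᵥ v = v ⬝ᵥ x := dotProduct_comm x v
      rw [hxv]
      nlinarith [sq_nonneg (v ⬝ᵥ x), Nat.cast_nonneg (α := ℝ) r]
  have hApd : A.PosDef := hAB ▸ hpd.add_posSemidef hVpsd
  have hAunit : IsUnit A := hApd.isUnit
  have hAdet : IsUnit A.det := (isUnit_iff_isUnit_det A).mp hAunit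
  have hA1 : A * A⁻¹ = 1 := mul_nonsing_inv A hAdet
  set s : ℝ := v ⬝ᵥ (A⁻¹ *ᵥ v) with hs
  clear_value s
  have hds : d = (r : ℝ) * s := hd
  by_cases hv0 : v = 0
  · -- degenerate case
    have hd0 : d = 0 := by simp [hds, hs, hv0]
    have hV0 : V = 0 := by ext i j; simp [hVdef, hv0, vecMulVec_apply]
    have hBA : B = A := by rw [hAB, hV0]; simp
    rw [hBA, hd0, hV0]
    simp
  · -- main case
    have hs_pos : 0 < s := by
      have := hApd.inv.dotProduct_mulVec_pos (x := v) (by simpa using hv0)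
      simpa [hs] using this
    have hw : A *ᵥ (A⁻¹ *ᵥ v) = v := by
      rw [mulVec_mulVec, hA1, one_mulVec]
    have hwne : A⁻¹ *ᵥ v ≠ 0 := by
      intro h
      apply hv0
      rw [← hw, h, mulVec_zero]
    have hBw : (A⁻¹ *ᵥ v) ⬝ᵥ (B *ᵥ (A⁻¹ *ᵥ v)) = s * (1 - d) := by
      have hBA : B = A - (r : ℝ) • V := by rw [hAB, add_sub_cancel_right]
      rw [hBA, sub_mulVec, dotProduct_sub, hw]
      have h1 : (A⁻¹ *ᵥ v) ⬝ᵥ v = s := by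
        rw [hs, dotProduct_comm]
      have h2 : (A⁻¹ *ᵥ v) ⬝ᵥ (((r : ℝ) • V) *ᵥ (A⁻¹ *ᵥ v)) = (r : ℝ) * s * s := by
        rw [hVdef, smul_mulVec, vecMulVec_mulVec']
        simp only [dotProduct_smul, smul_eq_mul, ← hs, h1]
        ring
      rw [h1, h2, hds]
      ring
    have h1d : 0 < 1 - d := by
      have := hpd.dotProduct_mulVec_pos (x := A⁻¹ *ᵥ v) (by simpa using hwne)
      rw [star_trivial, hBw] at this
      nlinarith
    have h1dne : (1 : ℝ) - d ≠ 0 := ne_of_gt h1d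
    set c : ℝ := (r : ℝ) / (1 - d) with hc
    clear_value c
    have hcoef : c - (r : ℝ) - (r : ℝ) * c * s = 0 := by
      have hcr : c * (1 - d) = (r : ℝ) := by rw [hc]; exact div_mul_cancel₀ _ h1dne
      linear_combination hcr + c * hds
    -- V * A⁻¹ * V = s • V
    have hVAV : V * A⁻¹ * V = s • V := by
      rw [hVdef, vecMulVec_mul', vecMulVec_mul_vecMulVec']
      congr 1
      rw [hs, dotProduct_mulVec]
    have hBA : B = A - (r : ℝ) • V := by rw [hAB, add_sub_cancel_right]
    have e1 : A * (A⁻¹ * V * A⁻¹) = V * A⁻¹ := by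
      rw [← Matrix.mul_assoc, ← Matrix.mul_assoc, hA1, Matrix.one_mul]
    have e2 : V * (A⁻¹ * V * A⁻¹) = s • (V * A⁻¹) := by
      rw [← Matrix.mul_assoc V (A⁻¹ * V) A⁻¹, ← Matrix.mul_assoc V A⁻¹ V, hVAV,
        Matrix.smul_mul]
    have hright : B * (A⁻¹ + c • (A⁻¹ * V * A⁻¹)) = 1 := by
      rw [hBA, Matrix.sub_mul, Matrix.mul_add, Matrix.mul_add, hA1, mul_smul_comm, e1,
        Matrix.smul_mul, Matrix.smul_mul, mul_smul_comm, e2]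
      have hW : (1 : Matrix (Fin p) (Fin p) ℝ) + c • (V * A⁻¹)
          - ((r : ℝ) • (V * A⁻¹) + (r : ℝ) • c • s • (V * A⁻¹))
          = 1 + (c - (r : ℝ) - (r : ℝ) * c * s) • (V * A⁻¹) := by module
      rw [hW, hcoef, zero_smul, add_zero]
    exact inv_eq_right_inv hright
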